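/- Let n > 1 be an odd integer. Then: (i) if ZMod(n) is a halidon ring with index m, then m divides p − 1 for every prime p dividing n, hence m divides gcd{p − 1 : p prime, p ∣ n}; and (ii) ZMod(n) is a halidon ring with index gcd{p − 1 : p prime, p ∣ n}. Consequently the maximal halidon index of ZMod(n) is ψ(n) = gcd{p − 1 : p prime, p ∣ n}. -/

import Mathlib

def IsPrimitiveHalidonRoot {R : Type*} [CommRing R] (m : ℕ) (ω : R) : Prop :=
  ω ^ m = 1 ∧ (∀ k : ℕ, 0 < k → k < m → ω ^ k ≠ 1) ∧
    ∀ k : ℕ, 0 < k → k < m → ∑ r ∈ Finset.range m, ω ^ (r * k) = 0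

def IsHalidonRing (R : Type*) [CommRing R] (m : ℕ) : Prop :=
  IsUnit (m : R) ∧ ∃ ω : R, IsPrimitiveHalidonRoot m ω

/-- The halidon function: for odd `n`, the gcd of `p - 1` over the primes `p` dividing `n`. -/
def halidonPsi (n : ℕ) : ℕ := n.primeFactors.gcd (fun p => p - 1)

lemma halidon_geom_aux {R : Type*} [CommRing R] (m : ℕ) (x : R) (h : x ^ m = 1)
    (hu : IsUnit (x - 1)) : ∑ r ∈ Finset.range m, x ^ r = 0 := by
  have hg := geom_sum_mul x m
  rw [h, sub_self] at hg
  exact (hu.mul_left_eq_zero).mp hg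

lemma castHom_unit_aux {p : ℕ} [hp : Fact p.Prime] {e : ℕ} (he : e ≠ 0) (y : ZMod (p ^ e))
    (hy : ZMod.castHom (dvd_pow_self p he) (ZMod p) y ≠ 0) : IsUnit y := by
  haveI : NeZero (p ^ e) := ⟨pow_ne_zero _ hp.out.pos.ne'⟩
  have hval : ((y.val : ℕ) : ZMod (p ^ e)) = y := ZMod.natCast_rightInverse y
  rw [← hval, ZMod.isUnit_iff_coprime, Nat.coprime_pow_right_iff (Nat.pos_of_ne_zero he),
    Nat.coprime_comm, hp.out.coprime_iff_not_dvd]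
  intro hdvd
  apply hy
  rw [← hval, map_natCast]
  exact (ZMod.natCast_eq_zero_iff _ _).mpr hdvd

lemma halidon_local_root {p : ℕ} [hp : Fact p.Prime] {e m : ℕ} (he : e ≠ 0) (hm : 0 < m)
    (hmd : m ∣ p - 1) :
    ∃ ω : ZMod (p ^ e), ω ^ m = 1 ∧
      ∀ k : ℕ, 0 < k → k < m → ω ^ k ≠ 1 ∧ IsUnit (ω ^ k - 1) := by
  haveI : NeZero (p ^ e) := ⟨pow_ne_zero _ hp.out.pos.ne'⟩
  have hp1 : 0 < p - 1 := Nat.sub_pos_of_lt hp.out.one_lt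
  obtain ⟨g, hg⟩ := IsCyclic.exists_generator (α := (ZMod p)ˣ)
  have hog : orderOf g = p - 1 := by
    rw [orderOf_eq_card_of_forall_mem_zpowers hg, Nat.card_eq_fintype_card,
      ZMod.card_units_eq_totient, Nat.totient_prime hp.out]
  obtain ⟨G, hG⟩ := ZMod.unitsMap_surjective (m := p ^ e) (dvd_pow_self p he) g
  set f := ZMod.unitsMap (m := p ^ e) (n := p) (dvd_pow_self p he) with hf
  set h := G ^ (p ^ (e - 1)) with hh
  have hcard : Fintype.card (ZMod (p ^ e))ˣ = p ^ (e - 1) * (p - 1) := by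
    rw [ZMod.card_units_eq_totient, Nat.totient_prime_pow hp.out (Nat.pos_of_ne_zero he)]
  have hcop : Nat.Coprime (p - 1) (p ^ (e - 1)) := by
    refine Nat.Coprime.pow_right _ ?_
    have : Nat.Coprime (p - 1) ((p - 1) + 1) :=
      Nat.coprime_self_add_right.mpr (Nat.coprime_one_right _)
    rwa [Nat.sub_add_cancel hp.out.one_le] at this
  have hfh : f h = g ^ (p ^ (e - 1)) := by rw [hh, map_pow, hG]
  have hofh : orderOf (f h) = p - 1 := by
    rw [hfh, orderOf_pow' _ (pow_ne_zero _ hp.out.pos.ne'), hog, hcop.gcd_eq_one, Nat.div_one]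
  have hoh : orderOf h = p - 1 := by
    refine Nat.dvd_antisymm ?_ ?_
    · apply orderOf_dvd_of_pow_eq_one
      rw [hh, ← pow_mul, ← hcard]
      exact pow_card_eq_one
    · rw [← hofh]; exact orderOf_map_dvd f h
  set u := h ^ ((p - 1) / m) with hu
  have hgcd : Nat.gcd (p - 1) ((p - 1) / m) = (p - 1) / m :=
    Nat.gcd_eq_right (Nat.div_dvd_of_dvd hmd)
  have hdm : (p - 1) / m ≠ 0 := by
    refine Nat.div_ne_zero_iff_of_dvd hmd |>.mpr ⟨hp1.ne', hm.ne'⟩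
  have hou : orderOf u = m := by
    rw [hu, orderOf_pow' _ hdm, hoh, hgcd, Nat.div_div_self hmd hp1.ne']
  have hofu : orderOf (f u) = m := by
    rw [hu, map_pow, orderOf_pow' _ hdm, hofh, hgcd, Nat.div_div_self hmd hp1.ne']
  refine ⟨(u : ZMod (p ^ e)), ?_, ?_⟩
  · rw [← Units.val_pow_eq_pow_val, ← hou, pow_orderOf_eq_one, Units.val_one]
  · intro k hk0 hkm
    constructor
    · intro hone
      have : u ^ k = 1 := Units.ext (by rwa [Units.val_pow_eq_pow_val])
      have := orderOf_dvd_of_pow_eq_one this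
      rw [hou] at this
      exact absurd (Nat.le_of_dvd hk0 this) (not_le.mpr hkm)
    · refine castHom_unit_aux he _ ?_
      rw [map_sub, map_pow, map_one]
      intro h0
      have hcast : (ZMod.castHom (dvd_pow_self p he) (ZMod p)) (u : ZMod (p ^ e))
          = ((f u : (ZMod p)ˣ) : ZMod p) := rfl
      rw [sub_eq_zero, hcast] at h0
      have : (f u) ^ k = 1 := Units.ext (by rwa [Units.val_pow_eq_pow_val])
      have := orderOf_dvd_of_pow_eq_one this
      rw [hofu] at this
      exact absurd (Nat.le_of_dvd hk0 this) (not_le.mpr hkm)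

lemma halidon_dvd_aux {n : ℕ} (hn : 1 < n) {m : ℕ} (hm : 0 < m)
    (h : IsHalidonRing (ZMod n) m) {p : ℕ} (hp : p.Prime) (hpn : p ∣ n) : m ∣ p - 1 := by
  haveI : Fact p.Prime := ⟨hp⟩
  haveI : NeZero n := ⟨by omega⟩
  obtain ⟨hmu, ω, hpow, hlt, hsum⟩ := h
  set f := ZMod.castHom hpn (ZMod p) with hf
  set ω' := f ω with hω'
  have hpow' : ω' ^ m = 1 := by rw [hω', ← map_pow, hpow, map_one]
  have hunit : IsUnit ω' := IsUnit.of_pow_eq_one hpow' hm.ne'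
  set u := hunit.unit with huu
  have hum : u ^ m = 1 := Units.ext (by
    rw [Units.val_pow_eq_pow_val, IsUnit.unit_spec, Units.val_one]; exact hpow')
  have hdvd : orderOf u ∣ m := orderOf_dvd_of_pow_eq_one hum
  have hord : orderOf u = m := by
    by_contra hne
    have hklt : orderOf u < m := lt_of_le_of_ne (Nat.le_of_dvd hm hdvd) hne
    have hk0 : 0 < orderOf u := orderOf_pos u
    set k := orderOf u with hk
    have hωk : ω' ^ k = 1 := by
      have := pow_orderOf_eq_one u
      have := congrArg (Units.val) this
      rwa [Units.val_pow_eq_pow_val, IsUnit.unit_spec, Units.val_one] at this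
    have hz : ∑ r ∈ Finset.range m, f (ω ^ (r * k)) = 0 := by
      have := congrArg f (hsum k hk0 hklt)
      rwa [map_sum, map_zero] at this
    have h0 : ((m : ℕ) : ZMod p) = 0 := by
      calc ((m : ℕ) : ZMod p) = ∑ _r ∈ Finset.range m, (1 : ZMod p) := by simp
        _ = ∑ r ∈ Finset.range m, (ω' ^ k) ^ r := by rw [hωk]; simp
        _ = ∑ r ∈ Finset.range m, f (ω ^ (r * k)) := by
            refine Finset.sum_congr rfl fun r _ => ?_
            rw [map_pow, mul_comm r k, pow_mul]
        _ = 0 := hz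
    have hmup : IsUnit ((m : ℕ) : ZMod p) := by
      have := hmu.map f
      rwa [map_natCast] at this
    rw [h0] at hmup
    exact not_isUnit_zero hmup
  rw [← hord, ← Nat.totient_prime hp, ← ZMod.card_units_eq_totient p]
  exact orderOf_dvd_card

/-- For odd `n > 1`: (i) any halidon index `m` of `ZMod n` divides `p - 1` for every
prime `p ∣ n`, hence divides `ψ(n) = gcd {p - 1 : p prime, p ∣ n}`; and
(ii) `ZMod n` is a halidon ring with index `ψ(n)`.  Thus `ψ(n)` is the maximal
halidon index of `ZMod n`. -/
theorem zmod_maximal_halidon_index (n : ℕ) (hn : 1 < n) (hodd : Odd n) :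
    (∀ m : ℕ, 0 < m → IsHalidonRing (ZMod n) m →
      (∀ p : ℕ, p.Prime → p ∣ n → m ∣ p - 1) ∧ m ∣ halidonPsi n) ∧
    IsHalidonRing (ZMod n) (halidonPsi n) := by
  have hn0 : n ≠ 0 := by omega
  constructor
  · intro m hm h
    have key : ∀ p : ℕ, p.Prime → p ∣ n → m ∣ p - 1 := fun p hp hpn =>
      halidon_dvd_aux hn hm h hp hpn
    refine ⟨key, Finset.dvd_gcd fun p hp => ?_⟩
    exact key p (Nat.prime_of_mem_primeFactors hp) (Nat.dvd_of_mem_primeFactors hp)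
  · -- Part (ii)
    set m := halidonPsi n with hmdef
    have hmp : ∀ p ∈ n.primeFactors, m ∣ p - 1 := fun p hp => Finset.gcd_dvd hp
    have hodd_p : ∀ p ∈ n.primeFactors, 3 ≤ p := by
      intro p hp
      have hpp := Nat.prime_of_mem_primeFactors hp
      have hpd := Nat.dvd_of_mem_primeFactors hp
      rcases hpp.two_le.lt_or_eq with h2 | h2
      · omega
      · exfalso
        rw [← h2] at hpd
        exact (Nat.not_odd_iff_even.mpr (hpd.elim fun c hc => ⟨c, by omega⟩)) hodd
    have hm0 : 0 < m := by
      rcases Nat.eq_zero_or_pos m with h0 | h0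
      · exfalso
        obtain ⟨p, hp⟩ := (Nat.nonempty_primeFactors.mpr hn)
        have := hmp p hp
        rw [h0] at this
        have := Nat.eq_zero_of_zero_dvd this
        have := hodd_p p hp
        omega
      · exact h0
    constructor
    · -- m is a unit in ZMod n
      rw [ZMod.isUnit_iff_coprime]
      by_contra hcop
      obtain ⟨q, hq, hqd⟩ := Nat.exists_prime_and_dvd hcop
      have hqm : q ∣ m := hqd.trans (Nat.gcd_dvd_left _ _)
      have hqn : q ∣ n := hqd.trans (Nat.gcd_dvd_right _ _)
      have hqf : q ∈ n.primeFactors := Nat.mem_primeFactors.mpr ⟨hq, hqn, hn0⟩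
      have h1 : q ∣ q - 1 := hqm.trans (hmp q hqf)
      have h3 := hodd_p q hqf
      have := Nat.le_of_dvd (by omega) h1
      omega
    · -- construct the primitive root via CRT
      have hfact : n = ∏ p ∈ n.primeFactors, p ^ n.factorization p := by
        conv_lhs => rw [← Nat.factorization_prod_pow_eq_self hn0]
        rw [Nat.prod_factorization_eq_prod_primeFactors]
      set s := n.primeFactors with hs
      set a : s → ℕ := fun p => (p : ℕ) ^ n.factorization p with ha
      have hcop : Pairwise (Function.onFun Nat.Coprime a) := by
        intro i j hij
        have hi := Nat.prime_of_mem_primeFactors i.2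
        have hj := Nat.prime_of_mem_primeFactors j.2
        have hne : (i : ℕ) ≠ (j : ℕ) := fun h => hij (Subtype.ext h)
        exact Nat.Coprime.pow _ _ ((Nat.coprime_primes hi hj).mpr hne)
      have hprod : n = ∏ i, a i := by
        rw [Finset.prod_coe_sort s (fun p => p ^ n.factorization p)]
        exact hfact
      set E : ZMod n ≃+* Π i, ZMod (a i) :=
        (ZMod.ringEquivCongr hprod).trans (ZMod.prodEquivPi a hcop) with hE
      have hroots : ∀ i : s, ∃ ω : ZMod (a i), ω ^ m = 1 ∧
          ∀ k : ℕ, 0 < k → k < m → ω ^ k ≠ 1 ∧ IsUnit (ω ^ k - 1) := by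
        intro i
        haveI : Fact (i : ℕ).Prime := ⟨Nat.prime_of_mem_primeFactors i.2⟩
        exact halidon_local_root
          (Nat.Prime.factorization_pos_of_dvd (Nat.prime_of_mem_primeFactors i.2) hn0
            (Nat.dvd_of_mem_primeFactors i.2)).ne' hm0 (hmp i i.2)
      choose w hw1 hw2 using hroots
      set ω : ZMod n := E.symm (fun i => w i) with hω
      have hEω : E ω = fun i => w i := E.apply_symm_apply _
      obtain ⟨p0, hp0⟩ := Nat.nonempty_primeFactors.mpr hn
      have hωm : ω ^ m = 1 := by
        apply E.injective
        rw [map_pow, hEω, map_one]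
        funext i
        simp [Pi.pow_apply, hw1 i]
      refine ⟨ω, hωm, ?_, ?_⟩
      · intro k hk0 hkm h1
        have h2 := congrArg E h1
        rw [map_pow, hEω, map_one] at h2
        have h3 := congrFun h2 ⟨p0, hp0⟩
        simp only [Pi.pow_apply, Pi.one_apply] at h3
        exact (hw2 ⟨p0, hp0⟩ k hk0 hkm).1 h3
      · intro k hk0 hkm
        have hsum_eq : ∑ r ∈ Finset.range m, ω ^ (r * k)
            = ∑ r ∈ Finset.range m, (ω ^ k) ^ r :=
          Finset.sum_congr rfl fun r _ => by rw [← pow_mul, mul_comm]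
        rw [hsum_eq]
        apply halidon_geom_aux
        · rw [← pow_mul, mul_comm, pow_mul, hωm, one_pow]
        · have hu : IsUnit (E (ω ^ k - 1)) := by
            rw [map_sub, map_pow, hEω, map_one]
            refine isUnit_iff_exists_inv.mpr
              ⟨fun i => (((hw2 i k hk0 hkm).2).unit⁻¹ : (ZMod (a i))ˣ), funext fun i => ?_⟩
            show ((fun i => w i) ^ k - 1) i * _ = 1
            simp only [Pi.sub_apply, Pi.pow_apply, Pi.one_apply]
            exact ((hw2 i k hk0 hkm).2).mul_val_inv
          have := hu.map E.symm
          rwa [RingEquiv.symm_apply_apply] at this
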